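/- Under the stated assumptions on V, for every j ∈ ℤ and every r = 1, …, p, V_{−r,j} = ṽ_{j−r} − h Σ_{ℓ=1}^{r} σ_{j−ℓ} Φ̂^{(r+1−ℓ)}_{j−ℓ}. -/

import Mathlib

/-- The discrete complex stretching grid
`Z_{j,k} = (j+k)h + i(h/ω) Σ_{ℓ=0}^{k-1} σ_ℓ` (the sum being 0 for `k ≤ 0`). -/
noncomputable def Zmap (h ω : ℝ) (σ : ℤ → ℝ) (j k : ℤ) : ℂ :=
  ((j + k : ℤ) : ℂ) * (h : ℂ) +
    Complex.I * ((h : ℂ) / (ω : ℂ)) * ∑ l ∈ Finset.range k.toNat, ((σ l : ℝ) : ℂ)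

/-- Discrete holomorphicity with respect to the grid `Zmap h ω σ`: the discrete
Cauchy–Riemann equations hold on every face. -/
def DiscreteHolo (h ω : ℝ) (σ : ℤ → ℝ) (F : ℤ → ℤ → ℂ) : Prop :=
  ∀ j k : ℤ,
    (F (j + 1) (k + 1) - F j k) * (Zmap h ω σ j (k + 1) - Zmap h ω σ (j + 1) k) =
    (F j (k + 1) - F (j + 1) k) * (Zmap h ω σ (j + 1) (k + 1) - Zmap h ω σ j k)

/-- The auxiliary variable `Φ̂^{(r)}_j = (V_{−r+1,j+1} − V_{−r,j}) / (iω(2h + iσ_j h/ω))`. -/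
noncomputable def PhiAux (h ω : ℝ) (σ : ℤ → ℝ) (V : ℤ → ℤ → ℂ) (r j : ℤ) : ℂ :=
  (V (-r + 1) (j + 1) - V (-r) j) /
    (Complex.I * (ω : ℂ) * (2 * (h : ℂ) + Complex.I * (σ j : ℂ) * (h : ℂ) / (ω : ℂ)))

/-- The auxiliary variable `Ψ̂^{(r)}_j = (V_{r,j} − V_{r−1,j−1}) / (iω(2h + iσ_{j−1} h/ω))`. -/
noncomputable def PsiAux (h ω : ℝ) (σ : ℤ → ℝ) (V : ℤ → ℤ → ℂ) (r j : ℤ) : ℂ :=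
  (V r j - V (r - 1) (j - 1)) /
    (Complex.I * (ω : ℂ) * (2 * (h : ℂ) + Complex.I * (σ (j - 1) : ℂ) * (h : ℂ) / (ω : ℂ)))

lemma Zdiff1 (h ω : ℝ) (σ : ℤ → ℝ) (hσneg : ∀ j : ℤ, j < 0 → σ j = 0) (j k : ℤ) :
    Zmap h ω σ j (k + 1) - Zmap h ω σ (j + 1) k =
      Complex.I * ((h : ℂ) / ω) * (σ k : ℂ) := by
  unfold Zmap
  rcases le_or_gt 0 k with hk | hk
  · have h1 : (k + 1).toNat = k.toNat + 1 := by omega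
    rw [h1, Finset.sum_range_succ]
    have h2 : ((k.toNat : ℕ) : ℤ) = k := Int.toNat_of_nonneg hk
    rw [h2]
    push_cast
    ring
  · have h1 : (k + 1).toNat = 0 := by omega
    have h2 : k.toNat = 0 := by omega
    rw [h1, h2, hσneg k hk]
    push_cast
    ring

lemma Zdiff2 (h ω : ℝ) (σ : ℤ → ℝ) (hσneg : ∀ j : ℤ, j < 0 → σ j = 0) (j k : ℤ) :
    Zmap h ω σ (j + 1) (k + 1) - Zmap h ω σ j k =
      2 * (h : ℂ) + Complex.I * ((h : ℂ) / ω) * (σ k : ℂ) := by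
  unfold Zmap
  rcases le_or_gt 0 k with hk | hk
  · have h1 : (k + 1).toNat = k.toNat + 1 := by omega
    rw [h1, Finset.sum_range_succ]
    have h2 : ((k.toNat : ℕ) : ℤ) = k := Int.toNat_of_nonneg hk
    rw [h2]
    push_cast
    ring
  · have h1 : (k + 1).toNat = 0 := by omega
    have h2 : k.toNat = 0 := by omega
    rw [h1, h2, hσneg k hk]
    push_cast
    ring

lemma stepV (h ω : ℝ) (hh : 0 < h) (hω : ω ≠ 0) (σ : ℤ → ℝ)
    (hσneg : ∀ j : ℤ, j < 0 → σ j = 0)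
    (V : ℤ → ℤ → ℂ) (hholo : DiscreteHolo h ω σ V) (r j : ℤ) :
    V (-r) j = V (-r + 1) (j - 1) -
      (h : ℂ) * ((σ (j - 1) : ℝ) : ℂ) * PhiAux h ω σ V r (j - 1) := by
  have H := hholo (-r) (j - 1)
  have hj : j - 1 + 1 = j := by ring
  rw [Zdiff1 h ω σ hσneg, Zdiff2 h ω σ hσneg, hj] at H
  unfold PhiAux
  rw [hj]
  have hI : Complex.I ≠ 0 := Complex.I_ne_zero
  have hωc : (ω : ℂ) ≠ 0 := by exact_mod_cast hω
  have hhc : (h : ℂ) ≠ 0 := by exact_mod_cast hh.ne'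
  have hE : (2 * (h : ℂ) + Complex.I * (σ (j-1) : ℂ) * (h : ℂ) / (ω : ℂ)) ≠ 0 := by
    intro hEq
    have := congrArg Complex.re hEq
    simp [Complex.add_re, Complex.mul_re, Complex.div_re, Complex.ofReal_re,
      Complex.ofReal_im, Complex.normSq, Complex.mul_im] at this
    exact hh.ne' this
  have hD : Complex.I * (ω : ℂ) *
      (2 * (h : ℂ) + Complex.I * (σ (j-1) : ℂ) * (h : ℂ) / (ω : ℂ)) ≠ 0 :=
    mul_ne_zero (mul_ne_zero hI hωc) hE
  have key : (V (-r) j - V (-r + 1) (j - 1)) *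
      (Complex.I * (ω : ℂ) * (2 * (h : ℂ) + Complex.I * (σ (j-1) : ℂ) * (h : ℂ) / (ω : ℂ)))
      = -((h : ℂ) * (σ (j-1) : ℂ)) * (V (-r + 1) j - V (-r) (j - 1)) := by
    have hw : (ω : ℂ) * (ω : ℂ)⁻¹ = 1 := mul_inv_cancel₀ hωc
    linear_combination (-(Complex.I * (ω : ℂ))) * H +
      ((ω : ℂ) * (ω : ℂ)⁻¹ * (h : ℂ) * (σ (j-1) : ℂ) * (V (-r + 1) j - V (-r) (j - 1))) * Complex.I_sq -
      ((h : ℂ) * (σ (j-1) : ℂ) * (V (-r + 1) j - V (-r) (j - 1))) * hw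
  have key2 : V (-r) j - V (-r + 1) (j - 1) =
      -((h : ℂ) * (σ (j-1) : ℂ)) * (V (-r + 1) j - V (-r) (j - 1)) /
      (Complex.I * (ω : ℂ) * (2 * (h : ℂ) + Complex.I * (σ (j-1) : ℂ) * (h : ℂ) / (ω : ℂ))) :=
    (eq_div_iff hD).mpr key
  linear_combination key2

/-- identity `V_{−r,j} = ṽ_{j−r} − h Σ_{ℓ=1}^{r} σ_{j−ℓ} Φ̂^{(r+1−ℓ)}_{j−ℓ}`,
where `ṽ_j = V_{0,j}`. -/
theorem stmt11
    (p : ℕ) (hp : 1 ≤ p) (h : ℝ) (hh : 0 < h)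
    (a : ℤ → ℝ) (hsym : ∀ r : ℤ, a (-r) = a r)
    (ω : ℝ) (hω : ω ≠ 0)
    (σ : ℤ → ℝ) (hσ : ∀ j : ℤ, 0 ≤ σ j) (hσneg : ∀ j : ℤ, j < 0 → σ j = 0)
    (V : ℤ → ℤ → ℂ) (hholo : DiscreteHolo h ω σ V)
    (heq : ∀ j k : ℤ, (∑ r ∈ Finset.Icc (-(p : ℤ)) (p : ℤ), (a r : ℂ) * V (j + r) k) +
        (ω : ℂ) ^ 2 * V j k = 0)
    (j : ℤ) (r : ℤ) (hr1 : 1 ≤ r) (hrp : r ≤ (p : ℤ)) :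
    V (-r) j = V 0 (j - r) -
      (h : ℂ) * ∑ l ∈ Finset.Icc (1 : ℤ) r,
        (σ (j - l) : ℂ) * PhiAux h ω σ V (r + 1 - l) (j - l) := by
  clear hrp heq hsym hσ hp
  suffices main : ∀ s : ℤ, 1 ≤ s → ∀ j : ℤ, V (-s) j = V 0 (j - s) -
      (h : ℂ) * ∑ l ∈ Finset.Icc (1 : ℤ) s,
        (σ (j - l) : ℂ) * PhiAux h ω σ V (s + 1 - l) (j - l) by
    exact main r hr1 j
  refine Int.le_induction ?_ ?_
  · intro j
    rw [Finset.Icc_self, Finset.sum_singleton]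
    have hs := stepV h ω hh hω σ hσneg V hholo 1 j
    norm_num at hs ⊢
    rw [hs]; ring
  · intro r hr ih j
    have hsum : ∀ (f : ℤ → ℂ), ∑ l ∈ Finset.Icc (1 : ℤ) (r + 1), f l =
        f 1 + ∑ l ∈ Finset.Icc (1 : ℤ) r, f (l + 1) := by
      intro f
      have h1 : Finset.Icc (1 : ℤ) (r + 1) =
          insert 1 ((Finset.Icc (1 : ℤ) r).map (addRightEmbedding 1)) := by
        rw [Finset.map_add_right_Icc]
        ext x
        simp only [Finset.mem_Icc, Finset.mem_insert]
        omega
      rw [h1, Finset.sum_insert, Finset.sum_map]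
      · simp [addRightEmbedding]
      · rw [Finset.map_add_right_Icc]
        simp only [Finset.mem_Icc]
        omega
    rw [hsum]
    have hstep := stepV h ω hh hω σ hσneg V hholo (r + 1) j
    have hn : -(r + 1) + 1 = -r := by ring
    rw [hn] at hstep
    have hih := ih (j - 1)
    have e1 : ∀ l : ℤ, j - (l + 1) = j - 1 - l := by intro l; ring
    have e2 : ∀ l : ℤ, r + 1 + 1 - (l + 1) = r + 1 - l := by intro l; ring
    have e3 : j - (r + 1) = j - 1 - r := by ring
    have e4 : r + 1 + 1 - 1 = r + 1 := by ring
    simp only [e1, e2, e3, e4]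
    rw [hstep, hih]
    ring
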